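/- The Conditional Value-at-Risk ρ(X) = −E[X | X ≤ Q_α(X)] is subadditive on 𝓜: for X, Y ∈ 𝓜 with X + Y ∈ 𝓜, ρ(X + Y) ≤ ρ(X) + ρ(Y). -/

import Mathlib

open MeasureTheory

/-- Conditional expectation of a random variable given an event. -/
noncomputable def condExpEvent {Ω : Type*} [MeasurableSpace Ω] (μ : Measure Ω)
    (Y : Ω → ℝ) (A : Set Ω) : ℝ :=
  (∫ ω in A, Y ω ∂μ) / (μ A).toReal

/-- The α-quantile `Q_α(X) = inf {x | P(X ≤ x) ≥ α}`. -/
noncomputable def quantile {Ω : Type*} [MeasurableSpace Ω] (μ : Measure Ω)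
    (α : ℝ) (X : Ω → ℝ) : ℝ :=
  sInf {x : ℝ | α ≤ (μ {ω | X ω ≤ x}).toReal}

/-- CVaR `ρ(X) = -E[X | X ≤ Q_α(X)]`. -/
noncomputable def cvar {Ω : Type*} [MeasurableSpace Ω] (μ : Measure Ω)
    (α : ℝ) (X : Ω → ℝ) : ℝ :=
  -condExpEvent μ X {ω | X ω ≤ quantile μ α X}


lemma key_min {Ω : Type*} [MeasurableSpace Ω] (μ : Measure Ω) [IsFiniteMeasure μ]
    (X : Ω → ℝ) (hmX : Measurable X) (hX : Integrable X μ) (q : ℝ)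
    (A : Set Ω) (hA : MeasurableSet A) (hμ : μ A = μ {ω | X ω ≤ q}) :
    ∫ ω in {ω | X ω ≤ q}, X ω ∂μ ≤ ∫ ω in A, X ω ∂μ := by
  set B : Set Ω := {ω | X ω ≤ q} with hBdef
  have hB : MeasurableSet B := measurableSet_le hmX measurable_const
  have hABm : μ (A \ B) = μ (B \ A) := by
    have h1 : μ (A ∩ B) + μ (A \ B) = μ A := measure_inter_add_diff A hB
    have h2 : μ (B ∩ A) + μ (B \ A) = μ B := measure_inter_add_diff B hA
    rw [Set.inter_comm B A] at h2
    have h3 : μ (A ∩ B) + μ (A \ B) = μ (A ∩ B) + μ (B \ A) := by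
      rw [h1, h2, hμ]
    exact (ENNReal.add_right_inj (measure_ne_top μ _)).mp h3
  have hd1 : Disjoint (A ∩ B) (A \ B) :=
    disjoint_sdiff_self_right.mono_left Set.inter_subset_right
  have hd2 : Disjoint (B ∩ A) (B \ A) :=
    disjoint_sdiff_self_right.mono_left Set.inter_subset_right
  have hsplitA : ∫ ω in A, X ω ∂μ = ∫ ω in A ∩ B, X ω ∂μ + ∫ ω in A \ B, X ω ∂μ := by
    rw [← setIntegral_union hd1 (hA.diff hB) hX.integrableOn hX.integrableOn,
      Set.inter_union_diff]
  have hsplitB : ∫ ω in B, X ω ∂μ = ∫ ω in A ∩ B, X ω ∂μ + ∫ ω in B \ A, X ω ∂μ := by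
    rw [Set.inter_comm A B,
      ← setIntegral_union hd2 (hB.diff hA) hX.integrableOn hX.integrableOn,
      Set.inter_union_diff]
  have h3 : ∫ ω in B \ A, X ω ∂μ ≤ q * (μ (B \ A)).toReal := by
    calc ∫ ω in B \ A, X ω ∂μ ≤ ∫ _ω in B \ A, q ∂μ :=
          setIntegral_mono_on hX.integrableOn ((integrable_const q).integrableOn)
            (hB.diff hA) (fun ω hω => hω.1)
      _ = q * (μ (B \ A)).toReal := by simp [setIntegral_const, mul_comm, Measure.real]
  have h4 : q * (μ (A \ B)).toReal ≤ ∫ ω in A \ B, X ω ∂μ := by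
    calc q * (μ (A \ B)).toReal = ∫ _ω in A \ B, q ∂μ := by
          simp [setIntegral_const, mul_comm, Measure.real]
      _ ≤ ∫ ω in A \ B, X ω ∂μ :=
          setIntegral_mono_on ((integrable_const q).integrableOn) hX.integrableOn
            (hA.diff hB) (fun ω hω => le_of_lt (lt_of_not_ge hω.2))
  rw [hABm] at h4
  rw [hsplitA, hsplitB]
  linarith

/-- Subadditivity of CVaR: for `X, Y ∈ M` with `X + Y ∈ M`, `ρ(X+Y) ≤ ρ(X) + ρ(Y)`. -/
theorem stmt2 {Ω : Type*} [MeasurableSpace Ω] (μ : Measure Ω) [IsProbabilityMeasure μ]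
    (α : ℝ) (hα : α ∈ Set.Ioo (0 : ℝ) 1)
    (M : Set (Ω → ℝ))
    (hadd : ∀ X ∈ M, ∀ Y ∈ M, X + Y ∈ M)
    (hsmul : ∀ X ∈ M, ∀ h : ℝ, 0 < h → (fun ω => h * X ω) ∈ M)
    (htrans : ∀ X ∈ M, ∀ a : ℝ, (fun ω => X ω + a) ∈ M)
    (hmeas : ∀ X ∈ M, Measurable X)
    (hint : ∀ X ∈ M, Integrable X μ)
    (hq : ∀ X ∈ M, (μ {ω | X ω ≤ quantile μ α X}).toReal = α)
    (X Y : Ω → ℝ) (hX : X ∈ M) (hY : Y ∈ M) (hXY : X + Y ∈ M) :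
    cvar μ α (X + Y) ≤ cvar μ α X + cvar μ α Y := by
  obtain ⟨hα0, hα1⟩ := hα
  have hmZ : Measurable (X + Y) := hmeas _ hXY
  have hiX : Integrable X μ := hint X hX
  have hiY : Integrable Y μ := hint Y hY
  set AZ : Set Ω := {ω | (X + Y) ω ≤ quantile μ α (X + Y)} with hAZdef
  have hAZ : MeasurableSet AZ := measurableSet_le hmZ measurable_const
  have hμX := hq X hX
  have hμY := hq Y hY
  have hμZ := hq _ hXY
  have hμZX : μ AZ = μ {ω | X ω ≤ quantile μ α X} := by
    rw [← ENNReal.toReal_eq_toReal_iff' (measure_ne_top μ _) (measure_ne_top μ _)]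
    rw [hμX, hμZ]
  have hμZY : μ AZ = μ {ω | Y ω ≤ quantile μ α Y} := by
    rw [← ENNReal.toReal_eq_toReal_iff' (measure_ne_top μ _) (measure_ne_top μ _)]
    rw [hμY, hμZ]
  have key1 := key_min μ X (hmeas X hX) hiX (quantile μ α X) AZ hAZ hμZX
  have key2 := key_min μ Y (hmeas Y hY) hiY (quantile μ α Y) AZ hAZ hμZY
  have hsplit : ∫ ω in AZ, (X + Y) ω ∂μ = ∫ ω in AZ, X ω ∂μ + ∫ ω in AZ, Y ω ∂μ := by
    simp only [Pi.add_apply]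
    exact integral_add hiX.integrableOn hiY.integrableOn
  unfold cvar condExpEvent
  rw [hμX, hμY, hμZ, hsplit]
  have h1 : (∫ ω in {ω | X ω ≤ quantile μ α X}, X ω ∂μ
      + ∫ ω in {ω | Y ω ≤ quantile μ α Y}, Y ω ∂μ) / α
      ≤ (∫ ω in AZ, X ω ∂μ + ∫ ω in AZ, Y ω ∂μ) / α := by
    gcongr
  have h2 : -((∫ ω in {ω | X ω ≤ quantile μ α X}, X ω ∂μ) / α)
      + -((∫ ω in {ω | Y ω ≤ quantile μ α Y}, Y ω ∂μ) / α)
      = -((∫ ω in {ω | X ω ≤ quantile μ α X}, X ω ∂μ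
        + ∫ ω in {ω | Y ω ≤ quantile μ α Y}, Y ω ∂μ) / α) := by ring
  rw [h2]
  exact neg_le_neg h1
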